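/- Let ABCD be an orthodiagonal quadrilateral with diagonals meeting at P (AC ⊥ BD). Then P lies on the nine-point circle of each of the four triangles BCD, CDA, DAB, ABC; hence P is the Euler–Poncelet point of the quadrangle ABCD. -/

import Mathlib

/-- `P` lies on the nine-point circle of triangle `XYZ`, i.e. on the (unique) circle
through the three midpoints of the sides. -/
def OnNinePointCircle (P X Y Z : EuclideanSpace ℝ (Fin 2)) : Prop :=
  ∀ (N : EuclideanSpace ℝ (Fin 2)) (r : ℝ),
    dist N (midpoint ℝ X Y) = r → dist N (midpoint ℝ Y Z) = r →
    dist N (midpoint ℝ Z X) = r → dist N P = r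

lemma sq_dist_eq (N M : EuclideanSpace ℝ (Fin 2)) :
    dist N M ^ 2 = ∑ i, (N i - M i) ^ 2 := by
  rw [EuclideanSpace.dist_eq, Real.sq_sqrt (by positivity)]
  simp [Real.dist_eq, sq_abs]

lemma key_foot (X Y Z P : EuclideanSpace ℝ (Fin 2)) (t : ℝ)
    (hP : P = X + t • (Z - X))
    (hp : (inner ℝ (Z - X) (P - Y) : ℝ) = 0) :
    OnNinePointCircle P X Y Z := by
  intro N r h1 h2 h3
  have hr : 0 ≤ r := h1 ▸ dist_nonneg
  have h1' : ∑ i, (N i - midpoint ℝ X Y i) ^ 2 = r ^ 2 := by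
    rw [← sq_dist_eq, h1]
  have h2' : ∑ i, (N i - midpoint ℝ Y Z i) ^ 2 = r ^ 2 := by
    rw [← sq_dist_eq, h2]
  have h3' : ∑ i, (N i - midpoint ℝ Z X i) ^ 2 = r ^ 2 := by
    rw [← sq_dist_eq, h3]
  have hkey : ∑ i, (N i - P i) ^ 2 = r ^ 2 := by
    subst hP
    simp only [PiLp.inner_apply, RCLike.inner_apply, conj_trivial, Fin.sum_univ_two,
      midpoint_eq_smul_add, invOf_eq_inv, PiLp.smul_apply, PiLp.add_apply, PiLp.sub_apply,
      smul_eq_mul] at hp h1' h2' h3' ⊢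
    linear_combination (1 - 2*t) * h1' + (2*t - 1) * h2' + h3' + (t - 1/2) * hp
  have hsq : dist N P ^ 2 = r ^ 2 := (sq_dist_eq N P).trans hkey
  have := congrArg Real.sqrt hsq
  rwa [Real.sqrt_sq dist_nonneg, Real.sqrt_sq hr] at this

theorem orthodiagonal_diagonal_point_on_ninePoint_circles
    (A B C D P : EuclideanSpace ℝ (Fin 2))
    (hconv : P ∈ segment ℝ A C ∧ P ∈ segment ℝ B D)
    (hperp : (inner ℝ (C - A) (D - B) : ℝ) = 0)
    (h₁ : ¬ Collinear ℝ ({A, B, C} : Set (EuclideanSpace ℝ (Fin 2))))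
    (h₂ : ¬ Collinear ℝ ({A, B, D} : Set (EuclideanSpace ℝ (Fin 2))))
    (h₃ : ¬ Collinear ℝ ({A, C, D} : Set (EuclideanSpace ℝ (Fin 2))))
    (h₄ : ¬ Collinear ℝ ({B, C, D} : Set (EuclideanSpace ℝ (Fin 2)))) :
    OnNinePointCircle P B C D ∧ OnNinePointCircle P C D A ∧
    OnNinePointCircle P D A B ∧ OnNinePointCircle P A B C := by
  obtain ⟨hAC, hBD⟩ := hconv
  rw [segment_eq_image'] at hAC hBD
  obtain ⟨t, _, hPt₀⟩ := hAC
  obtain ⟨s, _, hPs₀⟩ := hBD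
  have hPt : P = A + t • (C - A) := hPt₀.symm
  have hPs : P = B + s • (D - B) := hPs₀.symm
  have hPC : P - C = (t - 1) • (C - A) := by rw [hPt]; module
  have hPD : P - D = (s - 1) • (D - B) := by rw [hPs]; module
  have hPA : P - A = t • (C - A) := by rw [hPt]; module
  have hPB : P - B = s • (D - B) := by rw [hPs]; module
  have hperp' : (inner ℝ (D - B) (C - A) : ℝ) = 0 := by
    rw [real_inner_comm]; exact hperp
  refine ⟨?_, ?_, ?_, ?_⟩
  · exact key_foot B C D P s hPs (by
      rw [hPC, real_inner_smul_right, hperp']; ring)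
  · exact key_foot C D A P (1 - t) (by rw [hPt]; module) (by
      rw [hPD, real_inner_smul_right, ← neg_sub C A, inner_neg_left, hperp]; ring)
  · exact key_foot D A B P (1 - s) (by rw [hPs]; module) (by
      rw [hPA, real_inner_smul_right, ← neg_sub D B, inner_neg_left, hperp']; ring)
  · exact key_foot A B C P t hPt (by
      rw [hPB, real_inner_smul_right, hperp]; ring)
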